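/- (Classical choice of generators.) For n = 2, the Σ_2-submodule of M_2 generated by t̂_2 := (1,2) − (2,1) equals Kr(2). For every n ≥ 3, the Σ_n-submodule of M_n generated by the two elements r̂_n := (n−2,n) − (n−1,n) and t̂_n := (n−1,n) − (n,n−1) (i.e. the ℝ-linear span of their Σ_n-orbits) equals the augmentation kernel Kr(n) = ker ε. -/

import Mathlib

noncomputable section

/- Common setup: `Pn n` is the set of ordered pairs of distinct elements of `Fin n`,
`Mn n` the real vector space of finitely supported real functions on `Pn n`, with the
`Σ_n`-action `π • (i,j) = (π i, π j)`, and `eps` the augmentation sending every basis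
vector to `1`; `Kr(n) = ker eps`. -/

/-- Ordered pairs of distinct elements of `{1,…,n}`. -/
abbrev Pn (n : ℕ) := {p : Fin n × Fin n // p.1 ≠ p.2}

/-- The vector space `M_n` of finitely supported real functions on `Pn n`. -/
abbrev Mn (n : ℕ) := Pn n →₀ ℝ

/-- The basis vector of `Mn n` corresponding to a pair `(i,j)`. -/
def bv {n : ℕ} (p : Pn n) : Mn n := Finsupp.single p 1

/-- The linear action of `π ∈ Σ_n` on `M_n`, `π • (i,j) = (π i, π j)`. -/
def act {n : ℕ} (π : Equiv.Perm (Fin n)) : Mn n →ₗ[ℝ] Mn n :=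
  Finsupp.lmapDomain ℝ ℝ fun p => ⟨(π p.1.1, π p.1.2), fun h => p.2 (π.injective h)⟩

/-- The augmentation `ε : M_n → ℝ` sending every basis vector to `1`. -/
def eps (n : ℕ) : Mn n →ₗ[ℝ] ℝ := Finsupp.lsum ℝ fun _ => LinearMap.id

/-- The element `n` of `{1,…,n}` (1-indexed). -/
def q1 {n : ℕ} (_h : 2 ≤ n) : Fin n := ⟨n - 1, by omega⟩
/-- The element `n-1` of `{1,…,n}` (1-indexed). -/
def q2 {n : ℕ} (_h : 2 ≤ n) : Fin n := ⟨n - 2, by omega⟩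
/-- The element `n-2` of `{1,…,n}` (1-indexed). -/
def q3 {n : ℕ} (_h : 3 ≤ n) : Fin n := ⟨n - 3, by omega⟩
/-- The element `n-3` of `{1,…,n}` (1-indexed). -/
def q4 {n : ℕ} (_h : 4 ≤ n) : Fin n := ⟨n - 4, by omega⟩

/-- `t̂_n := (n−1,n) − (n,n−1)`. -/
def tHat {n : ℕ} (h : 2 ≤ n) : Mn n :=
  bv ⟨(q2 h, q1 h), Fin.ne_of_val_ne (show n - 2 ≠ n - 1 by omega)⟩
    - bv ⟨(q1 h, q2 h), Fin.ne_of_val_ne (show n - 1 ≠ n - 2 by omega)⟩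

/-- `r̂_n := (n−2,n) − (n−1,n)`. -/
def rHat {n : ℕ} (h : 3 ≤ n) : Mn n :=
  bv ⟨(q3 h, q1 (by omega)), Fin.ne_of_val_ne (show n - 3 ≠ n - 1 by omega)⟩
    - bv ⟨(q2 (by omega), q1 (by omega)), Fin.ne_of_val_ne (show n - 2 ≠ n - 1 by omega)⟩

/-- `l̂_n := 6·(n−1,n) − Σ_{(a,b)} (a,b)`, the sum over all six ordered pairs of distinct
elements of `{n−2, n−1, n}`. -/
def lHat {n : ℕ} (h : 3 ≤ n) : Mn n :=
  (6 : ℝ) • bv ⟨(q2 (by omega), q1 (by omega)),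
      Fin.ne_of_val_ne (show n - 2 ≠ n - 1 by omega)⟩
    - (bv ⟨(q3 h, q2 (by omega)), Fin.ne_of_val_ne (show n - 3 ≠ n - 2 by omega)⟩
      + bv ⟨(q2 (by omega), q3 h), Fin.ne_of_val_ne (show n - 2 ≠ n - 3 by omega)⟩
      + bv ⟨(q3 h, q1 (by omega)), Fin.ne_of_val_ne (show n - 3 ≠ n - 1 by omega)⟩
      + bv ⟨(q1 (by omega), q3 h), Fin.ne_of_val_ne (show n - 1 ≠ n - 3 by omega)⟩
      + bv ⟨(q2 (by omega), q1 (by omega)), Fin.ne_of_val_ne (show n - 2 ≠ n - 1 by omega)⟩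
      + bv ⟨(q1 (by omega), q2 (by omega)), Fin.ne_of_val_ne (show n - 1 ≠ n - 2 by omega)⟩)


section Helpers

lemma act_bv {n : ℕ} (π : Equiv.Perm (Fin n)) (p : Pn n) :
    act π (bv p) = bv ⟨(π p.1.1, π p.1.2), fun h => p.2 (π.injective h)⟩ := by
  simp [act, bv, Finsupp.lmapDomain_apply, Finsupp.mapDomain_single]

lemma act_bv' {n : ℕ} (π : Equiv.Perm (Fin n)) (p : Pn n) (q : Pn n)
    (h1 : π p.1.1 = q.1.1) (h2 : π p.1.2 = q.1.2) :
    act π (bv p) = bv q := by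
  rw [act_bv]
  congr 1
  exact Subtype.ext (Prod.ext h1 h2)

lemma eps_bv {n : ℕ} (p : Pn n) : eps n (bv p) = 1 := by
  simp [eps, bv]

lemma eps_act {n : ℕ} (π : Equiv.Perm (Fin n)) (f : Mn n) : eps n (act π f) = eps n f := by
  have h : (eps n).comp (act π) = eps n := by
    apply Finsupp.lhom_ext
    intro p v
    simp [eps, act, Finsupp.lmapDomain_apply, Finsupp.mapDomain_single]
  exact LinearMap.congr_fun h f

lemma eps_eq_sum {n : ℕ} (f : Mn n) : eps n f = f.sum fun _ v => v := by
  simp [eps, Finsupp.lsum_apply]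
  rfl

lemma decomp {n : ℕ} (f : Mn n) (p0 : Pn n) (hf : eps n f = 0) :
    f = f.sum fun p v => v • (bv p - bv p0) := by
  have h1 : (f.sum fun p v => v • bv p) = f := by
    have e : ∀ (p : Pn n) (v : ℝ), v • bv p = Finsupp.single p v := by
      intro p v
      simp [bv, Finsupp.smul_single]
    simp_rw [e]
    exact Finsupp.sum_single f
  have h2 : (f.sum fun p v => v • bv p0) = 0 := by
    rw [Finsupp.sum, ← Finset.sum_smul]
    have : (∑ p ∈ f.support, f p) = eps n f := by
      rw [eps_eq_sum, Finsupp.sum]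
    rw [this, hf, zero_smul]
  calc f = (f.sum fun p v => v • bv p) - (f.sum fun p v => v • bv p0) := by
        rw [h1, h2, sub_zero]
    _ = f.sum fun p v => v • (bv p - bv p0) := by
        rw [← Finsupp.sum_sub]
        congr 1
        funext p v
        rw [smul_sub]

lemma span_eq_ker {n : ℕ} (S : Set (Mn n)) (hS : ∀ x ∈ S, eps n x = 0) (p0 : Pn n)
    (hdiff : ∀ p : Pn n, bv p - bv p0 ∈ Submodule.span ℝ S) :
    Submodule.span ℝ S = LinearMap.ker (eps n) := by
  apply le_antisymm
  · rw [Submodule.span_le]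
    intro x hx
    simp only [SetLike.mem_coe, LinearMap.mem_ker]
    exact hS x hx
  · intro f hf
    rw [LinearMap.mem_ker] at hf
    rw [decomp f p0 hf]
    apply Submodule.finsuppSum_mem
    intro p _
    exact Submodule.smul_mem _ _ (hdiff p)

lemma exists_perm2 {n : ℕ} {a b x y : Fin n} (hab : a ≠ b) (hxy : x ≠ y) :
    ∃ π : Equiv.Perm (Fin n), π a = x ∧ π b = y := by
  classical
  set π1 := Equiv.swap a x with hπ1
  have h1a : π1 a = x := Equiv.swap_apply_left a x
  have hb1 : π1 b ≠ x := by
    intro h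
    exact hab (π1.injective (by rw [h1a, h])).symm
  refine ⟨π1.trans (Equiv.swap (π1 b) y), ?_, ?_⟩
  · simp only [Equiv.trans_apply, h1a]
    exact Equiv.swap_apply_of_ne_of_ne (Ne.symm hb1) hxy
  · simp only [Equiv.trans_apply]
    exact Equiv.swap_apply_left _ _

lemma exists_perm3 {n : ℕ} {a b c x y z : Fin n}
    (hab : a ≠ b) (hac : a ≠ c) (hbc : b ≠ c)
    (hxy : x ≠ y) (hxz : x ≠ z) (hyz : y ≠ z) :
    ∃ π : Equiv.Perm (Fin n), π a = x ∧ π b = y ∧ π c = z := by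
  classical
  obtain ⟨π, hπa, hπb⟩ := exists_perm2 hab hxy
  have hcx : π c ≠ x := by
    intro h; exact hac (π.injective (by rw [hπa, h]))
  have hcy : π c ≠ y := by
    intro h; exact hbc (π.injective (by rw [hπb, h]))
  refine ⟨π.trans (Equiv.swap (π c) z), ?_, ?_, ?_⟩
  · simp only [Equiv.trans_apply, hπa]
    exact Equiv.swap_apply_of_ne_of_ne (Ne.symm hcx) hxz
  · simp only [Equiv.trans_apply, hπb]
    exact Equiv.swap_apply_of_ne_of_ne (Ne.symm hcy) hyz
  · simp only [Equiv.trans_apply]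
    exact Equiv.swap_apply_left _ _

section BigN

variable {n : ℕ} (h : 3 ≤ n)

/-- The generating set for `n ≥ 3`. -/
def Sgen : Set (Mn n) :=
  {x : Mn n | ∃ π : Equiv.Perm (Fin n),
    x = act π (rHat h) ∨ x = act π (tHat (by omega))}

lemma q3_ne_q2 : q3 h ≠ q2 (by omega) := Fin.ne_of_val_ne (by simp [q3, q2]; omega)
lemma q3_ne_q1 : q3 h ≠ q1 (by omega) := Fin.ne_of_val_ne (by simp [q3, q1]; omega)
lemma q2_ne_q1 : q2 (by omega : 2 ≤ n) ≠ q1 (by omega) :=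
  Fin.ne_of_val_ne (by simp [q2, q1]; omega)

lemma memR {x y z : Fin n} (hxy : x ≠ y) (hxz : x ≠ z) (hyz : y ≠ z) :
    bv ⟨(x, z), hxz⟩ - bv ⟨(y, z), hyz⟩ ∈ Submodule.span ℝ (Sgen h) := by
  obtain ⟨π, h3, h2, h1⟩ := exists_perm3 (q3_ne_q2 h) (q3_ne_q1 h) (q2_ne_q1 h) hxy hxz hyz
  apply Submodule.subset_span
  refine ⟨π, Or.inl ?_⟩
  rw [rHat, map_sub, act_bv' π _ ⟨(x, z), hxz⟩ h3 h1, act_bv' π _ ⟨(y, z), hyz⟩ h2 h1]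

lemma memT {y z : Fin n} (hyz : y ≠ z) :
    bv ⟨(y, z), hyz⟩ - bv ⟨(z, y), hyz.symm⟩ ∈ Submodule.span ℝ (Sgen h) := by
  -- find w distinct from y and z
  have hw : ∃ w : Fin n, w ≠ y ∧ w ≠ z := by
    by_contra hc
    push_neg at hc
    have hsub : (Finset.univ : Finset (Fin n)) ⊆ {y, z} := by
      intro w _
      simp only [Finset.mem_insert, Finset.mem_singleton]
      rcases eq_or_ne w y with hh | hh
      · exact Or.inl hh
      · exact Or.inr (hc w hh)
    have h1 := Finset.card_le_card hsub
    have h2 : ({y, z} : Finset (Fin n)).card ≤ 2 :=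
      (Finset.card_insert_le _ _).trans (by simp)
    simp only [Finset.card_univ, Fintype.card_fin] at h1
    omega
  obtain ⟨w, hwy, hwz⟩ := hw
  obtain ⟨π, h3, h2, h1⟩ := exists_perm3 (q3_ne_q2 h) (q3_ne_q1 h) (q2_ne_q1 h) hwy hwz hyz
  apply Submodule.subset_span
  refine ⟨π, Or.inr ?_⟩
  rw [tHat, map_sub, act_bv' π _ ⟨(y, z), hyz⟩ h2 h1, act_bv' π _ ⟨(z, y), hyz.symm⟩ h1 h2]

lemma memC2 {z x y : Fin n} (hzx : z ≠ x) (hzy : z ≠ y) (hxy : x ≠ y) :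
    bv ⟨(z, x), hzx⟩ - bv ⟨(z, y), hzy⟩ ∈ Submodule.span ℝ (Sgen h) := by
  have key : bv ⟨(z, x), hzx⟩ - bv ⟨(z, y), hzy⟩ =
      (bv ⟨(z, x), hzx⟩ - bv ⟨(x, z), hzx.symm⟩)
      + (bv ⟨(x, z), hzx.symm⟩ - bv ⟨(y, z), hzy.symm⟩)
      + (bv ⟨(y, z), hzy.symm⟩ - bv ⟨(z, y), hzy⟩) := by abel
  rw [key]
  exact add_mem (add_mem (memT h hzx) (memR h hxy hzx.symm hzy.symm)) (memT h hzy.symm)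

lemma memDiff (p q : Pn n) :
    bv p - bv q ∈ Submodule.span ℝ (Sgen h) := by
  obtain ⟨⟨i, j⟩, hij⟩ := p
  obtain ⟨⟨k, l⟩, hkl⟩ := q
  simp only at hij hkl
  by_cases hjl : j = l
  · subst hjl
    by_cases hik : i = k
    · subst hik
      simp only [sub_self]
      exact zero_mem _
    · exact memR h hik hij hkl
  · by_cases hil : i = l
    · subst hil
      -- goal: bv (i,j) - bv (k,i), with k ≠ i
      by_cases hkj : k = j
      · subst hkj
        exact memT h hij
      · have key : bv ⟨(i, j), hij⟩ - bv ⟨(k, i), hkl⟩ =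
            (bv ⟨(i, j), hij⟩ - bv ⟨(k, j), hkj⟩)
            + (bv ⟨(k, j), hkj⟩ - bv ⟨(k, i), hkl⟩) := by abel
        rw [key]
        exact add_mem (memR h (fun e => hkl (e.symm)) hij hkj)
          (memC2 h hkj hkl (Ne.symm hij))
    · have key : bv ⟨(i, j), hij⟩ - bv ⟨(k, l), hkl⟩ =
          (bv ⟨(i, j), hij⟩ - bv ⟨(i, l), hil⟩)
          + (bv ⟨(i, l), hil⟩ - bv ⟨(k, l), hkl⟩) := by abel
      rw [key]
      refine add_mem (memC2 h hij hil hjl) ?_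
      by_cases hik : i = k
      · subst hik
        simp only [sub_self]
        exact zero_mem _
      · exact memR h hik hil hkl

end BigN

-- small n = 2 facts
lemma act_one {n : ℕ} (f : Mn n) : act (1 : Equiv.Perm (Fin n)) f = f := by
  have h : act (1 : Equiv.Perm (Fin n)) = LinearMap.id := by
    apply Finsupp.lhom_ext
    intro p v
    simp [act, Finsupp.lmapDomain_apply, Finsupp.mapDomain_single]
  rw [h]
  rfl

end Helpers

/-- classical choice of generators: the `Σ_2`-submodule of `M_2` generated by
`t̂_2` equals `Kr(2) = ker ε`, and for every `n ≥ 3` the `Σ_n`-submodule of `M_n` generated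
by `r̂_n` and `t̂_n` equals `Kr(n) = ker ε`. -/
theorem statement4 :
    (Submodule.span ℝ
        {x : Mn 2 | ∃ π : Equiv.Perm (Fin 2), x = act π (tHat (by norm_num))}
      = LinearMap.ker (eps 2))
    ∧ ∀ n : ℕ, ∀ h : 3 ≤ n,
        Submodule.span ℝ
          {x : Mn n | ∃ π : Equiv.Perm (Fin n),
            x = act π (rHat h) ∨ x = act π (tHat (by omega))}
        = LinearMap.ker (eps n) := by
  have le2 : (2 : ℕ) ≤ 2 := le_refl 2
  constructor
  · -- n = 2
    set p01 : Pn 2 := ⟨(⟨0, by omega⟩, ⟨1, by omega⟩), by decide⟩ with hp01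
    set p10 : Pn 2 := ⟨(⟨1, by omega⟩, ⟨0, by omega⟩), by decide⟩ with hp10
    have htHat : tHat (by norm_num : (2:ℕ) ≤ 2) = bv p01 - bv p10 := by
      rw [tHat]
      congr 1
    apply span_eq_ker
    · rintro x ⟨π, rfl⟩
      rw [eps_act, tHat, map_sub, eps_bv, eps_bv, sub_self]
    · intro p
      have hcase : ∀ q : Pn 2, q = p01 ∨ q = p10 := by decide
      have hmem : tHat (by norm_num : (2:ℕ) ≤ 2) ∈
          Submodule.span ℝ {x : Mn 2 | ∃ π : Equiv.Perm (Fin 2),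
            x = act π (tHat (by norm_num))} := by
        apply Submodule.subset_span
        exact ⟨1, (act_one _).symm⟩
      rcases hcase p with rfl | rfl
      · rw [sub_self]
        exact zero_mem _
      · have : bv p10 - bv p01 = -(tHat (by norm_num : (2:ℕ) ≤ 2)) := by
          rw [htHat]; abel
        rw [this]
        exact neg_mem hmem
  · intro n h
    have h2 : (2 : ℕ) ≤ n := by omega
    refine span_eq_ker _ ?_ ⟨(q2 h2, q1 h2), Fin.ne_of_val_ne (show n - 2 ≠ n - 1 by omega)⟩ ?_
    · rintro x ⟨π, rfl | rfl⟩
      · rw [eps_act, rHat, map_sub, eps_bv, eps_bv, sub_self]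
      · rw [eps_act, tHat, map_sub, eps_bv, eps_bv, sub_self]
    · intro p
      exact memDiff h _ _
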